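/- Let G be a connected split graph without universal vertices, with split partition V(G) = K ∪ I where K is a clique and I is an independent set. If S is a minimal u,v-separator for some non-adjacent pair u, v in G, then S = N(u) or S = N(v). -/

import Mathlib

open SimpleGraph Finset BigOperators

variable {V : Type*} [Fintype V] [DecidableEq V]

/-- `S` is a connected dominating set of `G`: every vertex is in `S` or has a neighbor in `S`,
and any two vertices of `S` are joined by a walk staying inside `S`
(i.e. `S` induces a connected subgraph). -/
def SimpleGraph.IsCDSet (G : SimpleGraph V) (S : Finset V) : Prop :=
  (∀ v : V, v ∈ S ∨ ∃ u ∈ S, G.Adj u v) ∧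
  ∀ u ∈ S, ∀ v ∈ S, ∃ p : G.Walk u v, ∀ x ∈ p.support, x ∈ S

/-- `(w, t)` is a connected-domishold structure of `G`. -/
def SimpleGraph.IsCDStructure (G : SimpleGraph V) (w : V → ℝ) (t : ℝ) : Prop :=
  (∀ v, 0 ≤ w v) ∧ 0 ≤ t ∧ ∀ S : Finset V, (t ≤ ∑ x ∈ S, w x) ↔ G.IsCDSet S

/-- `G` is connected-domishold. -/
def SimpleGraph.ConnectedDomishold (G : SimpleGraph V) : Prop :=
  ∃ (w : V → ℝ) (t : ℝ), G.IsCDStructure w t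

/-- `S` is a cutset of `G`: `G - S` is disconnected, i.e. there exist two vertices outside `S`
such that every walk between them meets `S`. -/
def SimpleGraph.IsCutset (G : SimpleGraph V) (S : Finset V) : Prop :=
  ∃ u v : V, u ∉ S ∧ v ∉ S ∧ u ≠ v ∧ ∀ p : G.Walk u v, ∃ x ∈ p.support, x ∈ S

/-- `S` is a minimal cutset of `G`. -/
def SimpleGraph.IsMinCutset (G : SimpleGraph V) (S : Finset V) : Prop :=
  G.IsCutset S ∧ ∀ S' ⊆ S, G.IsCutset S' → S' = S

/-- A hypergraph on vertex set `V`, given by its hyperedge predicate `Eh`, is threshold. -/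
def HypThreshold (Eh : Finset V → Prop) : Prop :=
  ∃ (w : V → ℝ) (t : ℝ), (∀ v, 0 ≤ w v) ∧ 0 ≤ t ∧
    ∀ X : Finset V, (∑ v ∈ X, w v ≤ t) ↔ ∀ e, Eh e → ¬ e ⊆ X

def HypOneSperner (Eh : Finset V → Prop) : Prop :=
  ∀ e f, Eh e → Eh f → e ≠ f → min (e \ f).card (f \ e).card = 1

def HypTwoSummable (Eh : Finset V → Prop) : Prop :=
  ∃ A₁ A₂ B₁ B₂ : Finset V,
    (∃ e, Eh e ∧ e ⊆ A₁) ∧ (∃ e, Eh e ∧ e ⊆ A₂) ∧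
    (∀ e, Eh e → ¬ e ⊆ B₁) ∧ (∀ e, Eh e → ¬ e ⊆ B₂) ∧
    ∀ v : V, ((if v ∈ A₁ then 1 else 0) + (if v ∈ A₂ then 1 else 0) : ℕ)
           = (if v ∈ B₁ then 1 else 0) + (if v ∈ B₂ then 1 else 0)

/-- `v` is a universal vertex of `G`: adjacent to every other vertex. -/
def SimpleGraph.IsUniversalVtx (G : SimpleGraph V) (v : V) : Prop :=
  ∀ u : V, u ≠ v → G.Adj v u

/-- `S` is a `u,v`-separator in `G`: `u, v ∉ S` and every `u`-`v` walk meets `S`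
(so `u` and `v` lie in different components of `G − S`). -/
def SimpleGraph.IsSeparator (G : SimpleGraph V) (u v : V) (S : Finset V) : Prop :=
  u ∉ S ∧ v ∉ S ∧ ∀ p : G.Walk u v, ∃ x ∈ p.support, x ∈ S

/-- `S` is a minimal `u,v`-separator: a separator containing no other `u,v`-separator. -/
def SimpleGraph.IsMinSeparator (G : SimpleGraph V) (u v : V) (S : Finset V) : Prop :=
  G.IsSeparator u v S ∧ ∀ S' ⊆ S, G.IsSeparator u v S' → S' = S

/-- In a connected split graph without universal vertices, with split partition `K ∪ I`,
every minimal `u,v`-separator for a non-adjacent pair `u ≠ v` equals `N(u)` or `N(v)`. -/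

private lemma walk_meets_nbr {V : Type*} {G : SimpleGraph V} {u v : V} (huv : u ≠ v)
    (p : G.Walk u v) : ∃ x ∈ p.support, G.Adj u x := by
  cases p with
  | nil => exact absurd rfl huv
  | cons h q =>
    exact ⟨_, by simp [SimpleGraph.Walk.support_cons, q.start_mem_support], h⟩

private lemma nbr_separator {V : Type*} [Fintype V] [DecidableEq V]
    (G : SimpleGraph V) [DecidableRel G.Adj] (u v : V) (huv : u ≠ v) (hadj : ¬ G.Adj u v) :
    G.IsSeparator u v (G.neighborFinset u) := by
  refine ⟨by simp, by simp [hadj], fun p => ?_⟩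
  obtain ⟨x, hx, hadjx⟩ := walk_meets_nbr huv p
  exact ⟨x, hx, (G.mem_neighborFinset u x).mpr hadjx⟩

private lemma nbr_separator' {V : Type*} [Fintype V] [DecidableEq V]
    (G : SimpleGraph V) [DecidableRel G.Adj] (u v : V) (huv : u ≠ v) (hadj : ¬ G.Adj u v) :
    G.IsSeparator u v (G.neighborFinset v) := by
  refine ⟨fun h => hadj (G.adj_symm ((G.mem_neighborFinset v u).mp h)), by simp, fun p => ?_⟩
  obtain ⟨x, hx, hadjx⟩ := walk_meets_nbr huv.symm p.reverse
  rw [SimpleGraph.Walk.support_reverse, List.mem_reverse] at hx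
  exact ⟨x, hx, (G.mem_neighborFinset v x).mpr hadjx⟩

theorem split_minSeparator_eq_neighborhood (G : SimpleGraph V) [DecidableRel G.Adj]
    (hconn : G.Connected) (K I : Finset V) (hpart : K ∪ I = Finset.univ)
    (hdisj : Disjoint K I) (hK : G.IsClique (↑K : Set V))
    (hI : ∀ u ∈ I, ∀ v ∈ I, u ≠ v → ¬ G.Adj u v)
    (huniv : ∀ v : V, ¬ G.IsUniversalVtx v)
    (u v : V) (huv : u ≠ v) (hadj : ¬ G.Adj u v)
    (S : Finset V) (hS : G.IsMinSeparator u v S) :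
    S = G.neighborFinset u ∨ S = G.neighborFinset v := by
  obtain ⟨⟨huS, hvS, hsep⟩, hmin⟩ := hS
  have memKI : ∀ x : V, x ∈ K ∨ x ∈ I := by
    intro x
    have : x ∈ K ∪ I := by rw [hpart]; exact Finset.mem_univ x
    simpa [Finset.mem_union] using this
  have nbrK : ∀ x ∈ I, ∀ w, G.Adj x w → w ∈ K := by
    intro x hx w hw
    rcases memKI w with h | h
    · exact h
    · exact absurd hw (hI x hx w h (G.ne_of_adj hw))
  -- case analysis
  rcases memKI u with hu | hu <;> rcases memKI v with hv | hv
  · exact absurd (hK hu hv huv) hadj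
  · -- u ∈ K, v ∈ I : N(v) ⊆ S
    right
    refine (hmin _ ?_ (nbr_separator' G u v huv hadj)).symm
    intro w hw
    by_contra hwS
    have hvw : G.Adj v w := (G.mem_neighborFinset v w).mp hw
    have hwK : w ∈ K := nbrK v hv w hvw
    have hwu : w ≠ u := fun h => hadj (G.adj_symm (h ▸ hvw))
    have hwu' : G.Adj w u := hK hwK hu hwu
    obtain ⟨x, hx, hxS⟩ := hsep ((SimpleGraph.Walk.cons hwu' SimpleGraph.Walk.nil).cons hvw).reverse
    rw [SimpleGraph.Walk.support_reverse, List.mem_reverse] at hx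
    simp only [SimpleGraph.Walk.support_cons, SimpleGraph.Walk.support_nil,
      List.mem_cons, List.mem_singleton] at hx
    rcases hx with rfl | rfl | rfl | h
    · exact hvS hxS
    · exact hwS hxS
    · exact huS hxS
    · exact absurd h List.not_mem_nil
  · -- u ∈ I, v ∈ K : N(u) ⊆ S
    left
    refine (hmin _ ?_ (nbr_separator G u v huv hadj)).symm
    intro w hw
    by_contra hwS
    have huw : G.Adj u w := (G.mem_neighborFinset u w).mp hw
    have hwK : w ∈ K := nbrK u hu w huw
    have hwv : w ≠ v := fun h => hadj (h ▸ huw)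
    have hwv' : G.Adj w v := hK hwK hv hwv
    obtain ⟨x, hx, hxS⟩ := hsep ((SimpleGraph.Walk.cons hwv' SimpleGraph.Walk.nil).cons huw)
    simp only [SimpleGraph.Walk.support_cons, SimpleGraph.Walk.support_nil,
      List.mem_cons, List.mem_singleton] at hx
    rcases hx with rfl | rfl | rfl | h
    · exact huS hxS
    · exact hwS hxS
    · exact hvS hxS
    · exact absurd h List.not_mem_nil
  · -- u ∈ I, v ∈ I
    by_cases hNu : G.neighborFinset u ⊆ S
    · exact Or.inl (hmin _ hNu (nbr_separator G u v huv hadj)).symm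
    · right
      refine (hmin _ ?_ (nbr_separator' G u v huv hadj)).symm
      obtain ⟨a, ha, haS⟩ := Finset.not_subset.mp hNu
      have hua : G.Adj u a := (G.mem_neighborFinset u a).mp ha
      have haK : a ∈ K := nbrK u hu a hua
      intro b hb
      by_contra hbS
      have hvb : G.Adj v b := (G.mem_neighborFinset v b).mp hb
      have hbK : b ∈ K := nbrK v hv b hvb
      by_cases hab : a = b
      · subst hab
        obtain ⟨x, hx, hxS⟩ := hsep ((SimpleGraph.Walk.cons (G.adj_symm hvb) SimpleGraph.Walk.nil).cons hua)
        simp only [SimpleGraph.Walk.support_cons, SimpleGraph.Walk.support_nil,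
          List.mem_cons, List.mem_singleton] at hx
        rcases hx with rfl | rfl | rfl | h
        · exact huS hxS
        · exact haS hxS
        · exact hvS hxS
        · exact absurd h List.not_mem_nil
      · have hab' : G.Adj a b := hK haK hbK hab
        obtain ⟨x, hx, hxS⟩ := hsep (((SimpleGraph.Walk.cons (G.adj_symm hvb) SimpleGraph.Walk.nil).cons hab').cons hua)
        simp only [SimpleGraph.Walk.support_cons, SimpleGraph.Walk.support_nil,
          List.mem_cons, List.mem_singleton] at hx
        rcases hx with rfl | rfl | rfl | rfl | h
        · exact huS hxS
        · exact haS hxS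
        · exact hbS hxS
        · exact hvS hxS
        · exact absurd h List.not_mem_nil
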